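/- arXiv:0704.2919 — 3 statements merged into one kernel-verified Lean document; each statement's English description precedes it below -/
import Mathlib

section
/- Let F be a ∪-closed family with base B. Then F is well-graded if and only if for any two distinct sets K and L in B there is a tight path in F from K to K ∪ L. -/
open Finset

variable {α : Type*} [DecidableEq α]

/-- The span of a family `G`: all unions of nonempty subfamilies of `G`. -/
def Span (G : Finset (Finset α)) : Finset (Finset α) :=
  (G.powerset.filter Finset.Nonempty).image fun H => H.sup id

/-- A family is ∪-closed if it contains the union of each of its nonempty subfamilies. -/
def UnionClosed (F : Finset (Finset α)) : Prop :=
  ∀ H ⊆ F, H.Nonempty → H.sup id ∈ F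

/-- `p` is a tight path from `P` to `Q` inside the family `F`. -/
def IsTightPath (F : Finset (Finset α)) (P Q : Finset α) (p : List (Finset α)) : Prop :=
  p.head? = some P ∧ p.getLast? = some Q ∧
  p.length = (symmDiff P Q).card + 1 ∧
  (∀ S ∈ p, S ∈ F) ∧
  List.Chain' (fun A B => (symmDiff A B).card = 1) p

/-- A family is well-graded if any two distinct members are joined by a tight path. -/
def WellGraded (F : Finset (Finset α)) : Prop :=
  ∀ P ∈ F, ∀ Q ∈ F, P ≠ Q → ∃ p, IsTightPath F P Q p

/-- `B` is a base of `F`: a minimal subfamily of `F` spanning `F`. -/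
def IsBase (B F : Finset (Finset α)) : Prop :=
  B ⊆ F ∧ Span B = F ∧ ∀ H ⊆ B, Span H = F → H = B

/-- `A` is an atom of `F` at `x`: an inclusion-minimal member of `F` containing `x`. -/
def IsAtomAt (F : Finset (Finset α)) (x : α) (A : Finset α) : Prop :=
  A ∈ F ∧ x ∈ A ∧ ∀ B ∈ F, x ∈ B → B ⊆ A → B = A

/-- `A` is an atom of `F`: either the empty set (if it is in `F`) or an atom at some point. -/
def IsAtomOf (F : Finset (Finset α)) (A : Finset α) : Prop :=
  (A = ∅ ∧ A ∈ F) ∨ ∃ x, IsAtomAt F x A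

/-- The surmise function: the collection of atoms of `F` at `x`. -/
def surmise (F : Finset (Finset α)) (x : α) : Finset (Finset α) :=
  F.filter fun A => x ∈ A ∧ ∀ B ∈ F, x ∈ B → B ⊆ A → B = A

/-- `{σ(x) : x ∈ ∪F}` forms a partition of `B \ {∅}`. -/
def SurmisePartition (F B : Finset (Finset α)) : Prop :=
  (∀ x ∈ F.sup id, ∀ y ∈ F.sup id,
      surmise F x = surmise F y ∨ Disjoint (surmise F x) (surmise F y)) ∧
  (F.sup id).sup (surmise F) = B.erase ∅

/-- The endpoints of `X` in the family `B`: elements of `X` lying in no proper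
subset of `X` belonging to `B`. -/
def endpoints (B : Finset (Finset α)) (X : Finset α) : Finset α :=
  X \ (B.filter fun Y => Y ⊂ X).sup id

/-- A family is discriminative if points contained in the same members are equal. -/
def Discriminative (F : Finset (Finset α)) : Prop :=
  ∀ u ∈ F.sup id, ∀ v ∈ F.sup id, (∀ S ∈ F, (u ∈ S ↔ v ∈ S)) → u = v

lemma union_mem {F : Finset (Finset α)} (hF : UnionClosed F) {A K : Finset α}
    (hA : A ∈ F) (hK : K ∈ F) : A ∪ K ∈ F := by
  have := hF {A, K} (by intro x hx; simp at hx; rcases hx with rfl | rfl <;> assumption)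
    ⟨A, by simp⟩
  simpa using this

lemma tight_trivial {F : Finset (Finset α)} {P : Finset α} (hP : P ∈ F) :
    IsTightPath F P P [P] :=
  ⟨rfl, rfl, by simp [symmDiff_self], by simpa, List.isChain_singleton _⟩

lemma sd_card_triangle (A B C : Finset α) :
    (symmDiff A C).card ≤ (symmDiff A B).card + (symmDiff B C).card :=
  le_trans (card_le_card (by simpa using symmDiff_triangle A B C)) (card_union_le _ _)

lemma chain_sd_bound : ∀ (p : List (Finset α)) (P Q : Finset α),
    p.head? = some P → p.getLast? = some Q →
    List.Chain' (fun A B => (symmDiff A B).card = 1) p →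
    (symmDiff P Q).card + 1 ≤ p.length := by
  intro p
  induction p with
  | nil => intro P Q h; simp at h
  | cons a t ih =>
    intro P Q hh hl hc
    cases t with
    | nil =>
      simp at hh hl
      subst hh; subst hl
      simp [symmDiff_self]
    | cons b t' =>
      have hh' : a = P := by simpa using hh
      subst hh'
      rw [List.getLast?_cons_cons] at hl
      unfold List.Chain' at hc; rw [List.isChain_cons_cons] at hc
      have hb := ih b Q rfl hl hc.2
      have htri := sd_card_triangle a b Q
      rw [hc.1] at htri
      simp only [List.length_cons] at *
      omega

lemma sd_union_left (A K Q : Finset α) :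
    symmDiff (A ∪ K) (A ∪ Q) = symmDiff K Q \ A := by
  ext y
  simp only [mem_symmDiff, mem_sdiff, mem_union]
  tauto

lemma tight_union {F : Finset (Finset α)} (hF : UnionClosed F) {A : Finset α} (hA : A ∈ F) :
    ∀ (p : List (Finset α)) (K Q : Finset α), IsTightPath F K Q p →
      ∃ q, IsTightPath F (A ∪ K) (A ∪ Q) q := by
  intro p
  induction p with
  | nil => intro K Q h; exact absurd h.1 (by simp)
  | cons a t ih =>
    intro K Q h
    obtain ⟨hh, hl, hlen, hmem, hc⟩ := h
    have ha : a = K := by simpa using hh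
    subst ha
    cases t with
    | nil =>
      have : a = Q := by simpa using hl
      subst this
      exact ⟨[A ∪ a], tight_trivial (union_mem hF hA (hmem a (by simp)))⟩
    | cons b t' =>
      rw [List.getLast?_cons_cons] at hl
      unfold List.Chain' at hc; rw [List.isChain_cons_cons] at hc
      -- the tail is a tight path from b to Q
      have hbound := chain_sd_bound (b :: t') b Q rfl hl hc.2
      have htri := sd_card_triangle a b Q
      rw [hc.1] at htri
      simp only [List.length_cons] at hlen hbound
      have hcard : (symmDiff b Q).card = t'.length := by omega
      have htail : IsTightPath F b Q (b :: t') :=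
        ⟨rfl, hl, by simp [hcard], fun S hS => hmem S (by simp [hS]), hc.2⟩
      obtain ⟨q, hq⟩ := ih b Q htail
      -- the toggled element x
      obtain ⟨x, hx⟩ := card_eq_one.1 hc.1
      -- x ∈ symmDiff a Q
      have hxaQ : x ∈ symmDiff a Q := by
        by_contra hxn
        have hsub : symmDiff a Q ⊆ symmDiff b Q := by
          intro y hy
          have : y ∈ symmDiff a b ∪ symmDiff b Q := by
            simpa using symmDiff_triangle a b Q hy
          rcases mem_union.1 this with h1 | h1
          · rw [hx] at h1; simp at h1; subst h1; exact absurd hy hxn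
          · exact h1
        have := card_le_card hsub
        omega
      have hxbQ : x ∉ symmDiff b Q := by
        have h1 : x ∈ symmDiff a b := by rw [hx]; simp
        rw [mem_symmDiff] at h1 hxaQ ⊢
        tauto
      have hsd : symmDiff a Q = insert x (symmDiff b Q) := by
        apply Finset.eq_of_superset_of_card_ge
        · intro y hy
          rcases mem_insert.1 hy with rfl | hy'
          · exact hxaQ
          · have : y ∈ symmDiff b a ∪ symmDiff a Q := by
              simpa using symmDiff_triangle b a Q hy'
            rcases mem_union.1 this with h1 | h1
            · rw [symmDiff_comm, hx] at h1; simp at h1; subst h1; exact absurd hy' hxbQ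
            · exact h1
        · rw [card_insert_of_notMem hxbQ]; omega
      by_cases hxA : x ∈ A
      · -- A ∪ a = A ∪ b, and symmDiff cards agree
        have heq : A ∪ a = A ∪ b := by
          have : symmDiff (A ∪ a) (A ∪ b) = ∅ := by
            rw [sd_union_left, hx]
            simp [hxA]
          rwa [← bot_eq_empty, symmDiff_eq_bot] at this
        rw [heq]
        exact ⟨q, hq⟩
      · -- prepend A ∪ a
        obtain ⟨qh, ql, qlen, qmem, qc⟩ := hq
        cases q with
        | nil => simp at qh
        | cons c q' =>
          have hc' : c = A ∪ b := by simpa using qh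
          subst hc'
          refine ⟨(A ∪ a) :: (A ∪ b) :: q', rfl, by rw [List.getLast?_cons_cons]; exact ql,
            ?_, ?_, ?_⟩
          · simp only [List.length_cons] at qlen ⊢
            rw [sd_union_left] at qlen ⊢
            rw [hsd]
            rw [insert_sdiff_of_notMem _ hxA]
            have : x ∉ symmDiff b Q \ A := by simp [hxbQ]
            rw [card_insert_of_notMem this]
            omega
          · intro S hS
            rcases List.mem_cons.1 hS with rfl | hS'
            · exact union_mem hF hA (hmem a (by simp))
            · exact qmem S hS'
          · unfold List.Chain'; rw [List.isChain_cons_cons]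
            refine ⟨?_, qc⟩
            rw [sd_union_left, hx, sdiff_eq_self_of_disjoint (by simpa using hxA)]
            simp


lemma tight_reverse {F : Finset (Finset α)} {P Q : Finset α} {p : List (Finset α)}
    (h : IsTightPath F P Q p) : IsTightPath F Q P p.reverse := by
  obtain ⟨hh, hl, hlen, hmem, hc⟩ := h
  refine ⟨?_, ?_, ?_, ?_, ?_⟩
  · rw [List.head?_reverse]; exact hl
  · rw [List.getLast?_reverse]; exact hh
  · rw [List.length_reverse, symmDiff_comm]; exact hlen
  · intro S hS; exact hmem S (List.mem_reverse.1 hS)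
  · unfold List.Chain' at hc ⊢; rw [List.isChain_reverse]
    refine hc.imp fun A B hAB => ?_
    show (symmDiff B A).card = 1
    rwa [symmDiff_comm]

lemma tight_append {F : Finset (Finset α)} {P R Q : Finset α} {p q : List (Finset α)}
    (hp : IsTightPath F P R p) (hq : IsTightPath F R Q q)
    (hcard : (symmDiff P Q).card = (symmDiff P R).card + (symmDiff R Q).card) :
    IsTightPath F P Q (p ++ q.tail) := by
  obtain ⟨ph, pl, plen, pmem, pc⟩ := hp
  obtain ⟨qh, ql, qlen, qmem, qc⟩ := hq
  cases p with
  | nil => simp at ph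
  | cons a p' =>
  cases q with
  | nil => simp at qh
  | cons c q' =>
  have ha : a = P := by simpa using ph
  have hcR : c = R := by simpa using qh
  subst ha; subst hcR
  refine ⟨by simp, ?_, ?_, ?_, ?_⟩
  · show ((a :: p') ++ q').getLast? = some Q
    cases q' with
    | nil =>
      have : c = Q := by simpa using ql
      subst this
      simpa using pl
    | cons d q'' =>
      rw [List.getLast?_append_of_ne_nil (l₁ := a :: p') (by simp)]
      rw [List.getLast?_cons_cons] at ql
      exact ql
  · simp only [List.length_append, List.length_cons, List.length_tail] at *
    omega
  · intro S hS
    rcases List.mem_append.1 hS with h1 | h1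
    · exact pmem S h1
    · have : S ∈ q' := by simpa using h1
      exact qmem S (by simp [this])
  · unfold List.Chain' at qc ⊢; rw [List.isChain_append]
    refine ⟨pc, qc.tail, ?_⟩
    intro x hx y hy
    have hx' : x = c := by rw [pl] at hx; exact (by simpa using hx : c = x).symm
    subst hx'
    rw [List.isChain_cons] at qc
    exact qc.1 y hy

lemma sd_card_mono_add {P R S : Finset α} (h1 : P ⊆ R) (h2 : R ⊆ S) :
    (symmDiff P S).card = (symmDiff P R).card + (symmDiff R S).card := by
  rw [symmDiff_of_le (le_iff_subset.2 (h1.trans h2)), symmDiff_of_le (le_iff_subset.2 h1),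
    symmDiff_of_le (le_iff_subset.2 h2), card_sdiff_of_subset (h1.trans h2), card_sdiff_of_subset h1, card_sdiff_of_subset h2]
  have := card_le_card h1
  have := card_le_card h2
  omega

lemma sd_card_updown (P Q : Finset α) :
    (symmDiff P Q).card = (symmDiff P (P ∪ Q)).card + (symmDiff (P ∪ Q) Q).card := by
  have h1 : symmDiff P (P ∪ Q) = Q \ P := by
    ext y; simp only [mem_symmDiff, mem_sdiff, mem_union]; tauto
  have h2 : symmDiff (P ∪ Q) Q = P \ Q := by
    ext y; simp only [mem_symmDiff, mem_sdiff, mem_union]; tauto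
  have h3 : symmDiff P Q = (Q \ P) ∪ (P \ Q) := by
    ext y; simp only [mem_symmDiff, mem_sdiff, mem_union]; tauto
  rw [h1, h2, h3, card_union_of_disjoint disjoint_sdiff_sdiff]

lemma mem_span {B : Finset (Finset α)} {P : Finset α} :
    P ∈ Span B ↔ ∃ H, H ⊆ B ∧ H.Nonempty ∧ H.sup id = P := by
  simp only [Span, mem_image, mem_filter, mem_powerset]
  constructor
  · rintro ⟨H, ⟨h1, h2⟩, h3⟩; exact ⟨H, h1, h2, h3⟩
  · rintro ⟨H, h1, h2, h3⟩; exact ⟨H, ⟨h1, h2⟩, h3⟩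

/-- `F` is well-graded iff for any two distinct sets `K`, `L` of its base there is a
tight path in `F` from `K` to `K ∪ L`. -/
theorem wellGraded_iff_base_paths (F B : Finset (Finset α)) (hF : UnionClosed F)
    (hB : IsBase B F) :
    WellGraded F ↔
      ∀ K ∈ B, ∀ L ∈ B, K ≠ L → ∃ p, IsTightPath F K (K ∪ L) p := by
  constructor
  · intro hWG K hK L hL hKL
    have hKF : K ∈ F := hB.1 hK
    have hLF : L ∈ F := hB.1 hL
    have hU : K ∪ L ∈ F := union_mem hF hKF hLF
    by_cases h : K = K ∪ L
    · exact ⟨[K], h ▸ tight_trivial hKF⟩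
    · exact hWG K hKF (K ∪ L) hU h
  · intro hbase
    have main1 : ∀ P ∈ F, ∀ L ∈ B, ∃ p, IsTightPath F P (P ∪ L) p := by
      intro P hP L hL
      by_cases hLP : L ⊆ P
      · rw [union_eq_left.2 hLP]
        exact ⟨[P], tight_trivial hP⟩
      · have hPB : P ∈ Span B := hB.2.1.symm ▸ hP
        obtain ⟨H, hHB, hHne, hHsup⟩ := mem_span.1 hPB
        obtain ⟨K, hKH⟩ := hHne
        have hKB : K ∈ B := hHB hKH
        have hKP : K ⊆ P := hHsup ▸ le_sup (f := id) hKH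
        have hKL : K ≠ L := fun h => hLP (h ▸ hKP)
        obtain ⟨p, hp⟩ := hbase K hKB L hL hKL
        obtain ⟨q, hq⟩ := tight_union hF hP p K (K ∪ L) hp
        have e1 : P ∪ K = P := union_eq_left.2 hKP
        have e2 : P ∪ (K ∪ L) = P ∪ L := by rw [← union_assoc, e1]
        exact ⟨q, by rwa [e1, e2] at hq⟩
    have main2 : ∀ (H : Finset (Finset α)), H ⊆ B → ∀ P ∈ F,
        ∃ p, IsTightPath F P (P ∪ H.sup id) p := by
      intro H
      induction H using Finset.induction_on with
      | empty =>
        intro _ P hP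
        refine ⟨[P], ?_⟩
        have : P ∪ (∅ : Finset (Finset α)).sup id = P := by simp
        rw [this]
        exact tight_trivial hP
      | @insert a H hnotin ih =>
        intro hsub P hP
        have haB : a ∈ B := hsub (mem_insert_self _ _)
        obtain ⟨p₁, hp₁⟩ := main1 P hP a haB
        have hPa : P ∪ a ∈ F := union_mem hF hP (hB.1 haB)
        obtain ⟨p₂, hp₂⟩ := ih (fun x hx => hsub (mem_insert_of_mem hx)) (P ∪ a) hPa
        have he : P ∪ (insert a H).sup id = (P ∪ a) ∪ H.sup id := by
          rw [sup_insert]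
          simp only [id_eq, sup_eq_union, union_assoc]
        rw [he]
        refine ⟨p₁ ++ p₂.tail, tight_append hp₁ hp₂ ?_⟩
        exact sd_card_mono_add subset_union_left subset_union_left
    intro P hP Q hQ hPQ
    have hQB : Q ∈ Span B := hB.2.1.symm ▸ hQ
    obtain ⟨H, hHB, hHne, hHsup⟩ := mem_span.1 hQB
    obtain ⟨p₁, hp₁⟩ := main2 H hHB P hP
    rw [hHsup] at hp₁
    obtain ⟨p₂, hp₂⟩ := main2 H hHB Q hQ
    rw [hHsup, union_self] at hp₂
    -- hp₂ is trivial; instead build path from Q to Q ∪ P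
    have hQPB : P ∈ Span B := hB.2.1.symm ▸ hP
    obtain ⟨H', hH'B, hH'ne, hH'sup⟩ := mem_span.1 hQPB
    obtain ⟨p₃, hp₃⟩ := main2 H' hH'B Q hQ
    rw [hH'sup, union_comm] at hp₃
    have hp₄ := tight_reverse hp₃
    exact ⟨p₁ ++ p₃.reverse.tail, tight_append hp₁ hp₄ (sd_card_updown P Q)⟩
end

section
/- The base of a ∪-closed well-graded family need not be well-graded: the family F = {∅, {a}, {b}, {c}, {a,b}, {a,c}, {b,c}, {c,d}, {a,b,c}, {a,c,d}, {b,c,d}, {a,b,c,d}, {a,b,c,d,e}} is ∪-closed and well-graded, its base is {∅, {a}, {b}, {c}, {c,d}, {a,b,c,d,e}}, and this base is not well-graded. -/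
open Finset

variable {α : Type*} [DecidableEq α]

-- auxiliary notions
def PairClosed (F : Finset (Finset α)) : Prop :=
  ∀ X ∈ F, ∀ Y ∈ F, X ∪ Y ∈ F

def NbGraded (F : Finset (Finset α)) : Prop :=
  ∀ P ∈ F, ∀ Q ∈ F, P ≠ Q →
    ∃ R ∈ F, (symmDiff P R).card = 1 ∧ (symmDiff R Q).card + 1 = (symmDiff P Q).card

instance (F : Finset (Finset α)) [Fintype α] : Decidable (PairClosed F) := by
  unfold PairClosed; infer_instance

instance (F : Finset (Finset α)) [Fintype α] : Decidable (NbGraded F) := by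
  unfold NbGraded; infer_instance

lemma unionClosed_of_pairClosed {F : Finset (Finset α)} (h : PairClosed F) :
    UnionClosed F := by
  intro H hH hne
  induction H using Finset.induction_on with
  | empty => exact absurd hne (by simp)
  | @insert x s hx ih =>
    rw [Finset.sup_insert]
    rcases s.eq_empty_or_nonempty with rfl | hs
    · simpa using hH (Finset.mem_insert_self x ∅)
    · exact h x (hH (Finset.mem_insert_self x _)) _
        (ih (fun y hy => hH (Finset.mem_insert_of_mem hy)) hs)

lemma symm_card_triangle (X Y Z : Finset α) :
    (symmDiff X Z).card ≤ (symmDiff X Y).card + (symmDiff Y Z).card :=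
  le_trans (Finset.card_le_card (symmDiff_triangle X Y Z)) (Finset.card_union_le _ _)

lemma chain_dist : ∀ (l : List (Finset α)) (X Y : Finset α),
    l.head? = some X → l.getLast? = some Y →
    List.Chain' (fun A B => (symmDiff A B).card = 1) l →
    (symmDiff X Y).card ≤ l.length - 1 := by
  intro l
  induction l with
  | nil => intro X Y h; simp at h
  | cons A t ih =>
    intro X Y hh hl hc
    simp only [List.head?_cons, Option.some_inj] at hh
    subst hh
    match t with
    | [] =>
      simp only [List.getLast?_singleton, Option.some_inj] at hl
      subst hl; simp
    | B :: t' =>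
      rw [List.getLast?_cons_cons] at hl
      rw [List.Chain', List.isChain_cons_cons] at hc
      have h2 := ih B Y rfl hl hc.2
      have h3 := symm_card_triangle A B Y
      simp only [List.length_cons] at h2 ⊢
      omega


lemma wellGraded_of_nbGraded {F : Finset (Finset α)} (h : NbGraded F) :
    WellGraded F := by
  have key : ∀ n (P : Finset α), P ∈ F → ∀ Q ∈ F, P ≠ Q → (symmDiff P Q).card = n →
      ∃ p, IsTightPath F P Q p := by
    intro n
    induction n using Nat.strong_induction_on with
    | _ n ihn =>
      intro P hP Q hQ hne hcard
      have hn0 : n ≠ 0 := by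
        intro h0; subst h0
        exact hne (symmDiff_eq_bot.mp (Finset.card_eq_zero.mp hcard))
      obtain ⟨R, hR, hPR, hRQ⟩ := h P hP Q hQ hne
      rcases eq_or_ne R Q with rfl | hRne
      · refine ⟨[P, R], rfl, rfl, ?_, ?_, ?_⟩
        · simp only [List.length_cons, List.length_nil]
          simp [symmDiff_comm] at hRQ ⊢
          omega
        · intro S hS; simp at hS; rcases hS with rfl | rfl <;> assumption
        · simpa [List.Chain', List.isChain_cons_cons] using hPR
      · have hdist : (symmDiff R Q).card = n - 1 := by omega
        have hlt : n - 1 < n := by omega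
        obtain ⟨p, hh, hl, hlen, hmem, hch⟩ := ihn (n-1) hlt R hR Q hQ hRne hdist
        match p, hh with
        | R :: t, rfl =>
          refine ⟨P :: R :: t, rfl, ?_, ?_, ?_, ?_⟩
          · rwa [List.getLast?_cons_cons]
          · simp only [List.length_cons] at hlen ⊢; omega
          · intro S hS
            rcases List.mem_cons.mp hS with rfl | hS'
            · exact hP
            · exact hmem S hS'
          · exact List.isChain_cons_cons.mpr ⟨hPR, hch⟩
  intro P hP Q hQ hne
  exact key _ P hP Q hQ hne rfl

lemma nbGraded_of_wellGraded {F : Finset (Finset α)} (h : WellGraded F) :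
    NbGraded F := by
  intro P hP Q hQ hne
  obtain ⟨p, hh, hl, hlen, hmem, hch⟩ := h P hP Q hQ hne
  have hn0 : (symmDiff P Q).card ≠ 0 := by
    intro h0; exact hne (symmDiff_eq_bot.mp (Finset.card_eq_zero.mp h0))
  match p, hh with
  | [P], rfl =>
    simp only [List.getLast?_singleton, Option.some_inj] at hl
    exact absurd hl hne
  | P :: R :: t, rfl =>
    rw [List.getLast?_cons_cons] at hl
    rw [List.Chain', List.isChain_cons_cons] at hch
    have hRmem : R ∈ F := hmem R (by simp)
    have hub := chain_dist (R :: t) R Q rfl hl hch.2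
    have htri := symm_card_triangle P R Q
    simp only [List.length_cons] at hlen hub
    refine ⟨R, hRmem, hch.1, by omega⟩

section Transport
variable {β : Type*} [DecidableEq β] (f : β ↪ α)

lemma mapSymmDiffAux (P Q : Finset β) :
    symmDiff (P.map f) (Q.map f) = Finset.map f (symmDiff P Q) := by
  simp only [symmDiff_def, Finset.map_eq_image, Finset.sup_eq_union,
    Finset.image_union, Finset.image_sdiff _ _ f.injective]

lemma card_symmDiff_map (P Q : Finset β) :
    (symmDiff (P.map f) (Q.map f)).card = (symmDiff P Q).card := by
  rw [mapSymmDiffAux, Finset.card_map]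

lemma sup_image_map (H : Finset (Finset β)) :
    (H.image (Finset.map f)).sup id = Finset.map f (H.sup id) := by
  induction H using Finset.induction_on with
  | empty => simp
  | @insert x s hx ih => simp [Finset.image_insert, Finset.sup_insert, ih, Finset.map_union]

lemma span_image_map (G : Finset (Finset β)) :
    Span (G.image (Finset.map f)) = (Span G).image (Finset.map f) := by
  ext X
  simp only [Span, Finset.mem_image, Finset.mem_filter, Finset.mem_powerset]
  constructor
  · rintro ⟨H, ⟨hsub, hne⟩, rfl⟩
    obtain ⟨H₀, hH₀, rfl⟩ := Finset.subset_image_iff.mp hsub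
    refine ⟨H₀.sup id, ⟨H₀, ⟨hH₀, ?_⟩, rfl⟩, (sup_image_map f H₀).symm⟩
    rcases hne with ⟨y, hy⟩
    obtain ⟨y₀, hy₀, -⟩ := Finset.mem_image.mp hy
    exact ⟨y₀, hy₀⟩
  · rintro ⟨Y, ⟨H₀, ⟨hH₀, hne⟩, rfl⟩, rfl⟩
    exact ⟨H₀.image (Finset.map f), ⟨Finset.image_subset_image hH₀, hne.image _⟩,
      sup_image_map f H₀⟩

lemma pairClosed_image {G : Finset (Finset β)} (h : PairClosed G) :
    PairClosed (G.image (Finset.map f)) := by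
  rintro X hX Y hY
  obtain ⟨X₀, hX₀, rfl⟩ := Finset.mem_image.mp hX
  obtain ⟨Y₀, hY₀, rfl⟩ := Finset.mem_image.mp hY
  rw [← Finset.map_union]
  exact Finset.mem_image_of_mem _ (h X₀ hX₀ Y₀ hY₀)

lemma nbGraded_image {G : Finset (Finset β)} (h : NbGraded G) :
    NbGraded (G.image (Finset.map f)) := by
  rintro P hP Q hQ hne
  obtain ⟨P₀, hP₀, rfl⟩ := Finset.mem_image.mp hP
  obtain ⟨Q₀, hQ₀, rfl⟩ := Finset.mem_image.mp hQ
  have hne₀ : P₀ ≠ Q₀ := fun h' => hne (by rw [h'])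
  obtain ⟨R₀, hR₀, h1, h2⟩ := h P₀ hP₀ Q₀ hQ₀ hne₀
  exact ⟨R₀.map f, Finset.mem_image_of_mem _ hR₀,
    by rw [card_symmDiff_map]; exact h1,
    by rw [card_symmDiff_map, card_symmDiff_map]; exact h2⟩

lemma nbGraded_of_image {G : Finset (Finset β)} (h : NbGraded (G.image (Finset.map f))) :
    NbGraded G := by
  rintro P₀ hP₀ Q₀ hQ₀ hne₀
  have hne : P₀.map f ≠ Q₀.map f := fun h' => hne₀ (Finset.map_injective f h')
  obtain ⟨R, hR, h1, h2⟩ := h (P₀.map f) (Finset.mem_image_of_mem _ hP₀)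
    (Q₀.map f) (Finset.mem_image_of_mem _ hQ₀) hne
  obtain ⟨R₀, hR₀, rfl⟩ := Finset.mem_image.mp hR
  exact ⟨R₀, hR₀, by rwa [card_symmDiff_map] at h1,
    by rwa [card_symmDiff_map, card_symmDiff_map] at h2⟩

lemma isBase_image {B₀ F₀ : Finset (Finset β)} (hsub : B₀ ⊆ F₀) (hspan : Span B₀ = F₀)
    (hmin : ∀ H ∈ B₀.powerset, Span H = F₀ → H = B₀) :
    IsBase (B₀.image (Finset.map f)) (F₀.image (Finset.map f)) := by
  refine ⟨Finset.image_subset_image hsub, by rw [span_image_map, hspan], ?_⟩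
  intro H hH hHspan
  obtain ⟨H₀, hH₀, rfl⟩ := Finset.subset_image_iff.mp hH
  rw [span_image_map] at hHspan
  have : Span H₀ = F₀ :=
    Finset.image_injective (Finset.map_injective f) hHspan
  rw [hmin H₀ (Finset.mem_powerset.mpr hH₀) this]

end Transport

lemma span_mono {G G' : Finset (Finset α)} (h : G ⊆ G') : Span G ⊆ Span G' := by
  intro X hX
  simp only [Span, Finset.mem_image, Finset.mem_filter, Finset.mem_powerset] at hX ⊢
  obtain ⟨H, ⟨hH, hne⟩, rfl⟩ := hX
  exact ⟨H, ⟨hH.trans h, hne⟩, rfl⟩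

lemma mem_span_of_mem {G : Finset (Finset α)} {X : Finset α} (h : X ∈ G) : X ∈ Span G := by
  simp only [Span, Finset.mem_image, Finset.mem_filter, Finset.mem_powerset]
  exact ⟨{X}, ⟨Finset.singleton_subset_iff.mpr h, Finset.singleton_nonempty X⟩, by simp⟩

lemma min_of_irr {B : Finset (Finset α)} (h : ∀ X ∈ B, X ∉ Span (B.erase X)) :
    ∀ H ∈ B.powerset, Span H = Span B → H = B := by
  intro H hH hspan
  rw [Finset.mem_powerset] at hH
  refine Finset.Subset.antisymm hH (fun X hX => ?_)
  by_contra hXH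
  have hsub : H ⊆ B.erase X := Finset.subset_erase.mpr ⟨hH, hXH⟩
  exact h X hX (span_mono hsub (hspan ▸ mem_span_of_mem hX))

section Concrete
set_option maxRecDepth 100000
set_option maxHeartbeats 4000000

def F5 : Finset (Finset (Fin 5)) :=
  {∅, {0}, {1}, {2}, {0, 1}, {0, 2}, {1, 2}, {2, 3}, {0, 1, 2},
    {0, 2, 3}, {1, 2, 3}, {0, 1, 2, 3}, {0, 1, 2, 3, 4}}

def B5 : Finset (Finset (Fin 5)) := {∅, {0}, {1}, {2}, {2, 3}, {0, 1, 2, 3, 4}}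

lemma pairClosed_F5 : PairClosed F5 := by decide

lemma nbGraded_F5 : NbGraded F5 := by decide

lemma sub_B5 : B5 ⊆ F5 := by decide

lemma span_B5 : Span B5 = F5 := by decide

lemma irr_B5 : ∀ X ∈ B5, X ∉ Span (B5.erase X) := by decide

lemma not_nbGraded_B5 : ¬ NbGraded B5 := by decide

end Concrete


/-- The base of a ∪-closed well-graded family need not be well-graded. -/
theorem base_of_wg_family_not_wg (a b c d e : α)
    (hab : a ≠ b) (hac : a ≠ c) (had : a ≠ d) (hae : a ≠ e)
    (hbc : b ≠ c) (hbd : b ≠ d) (hbe : b ≠ e)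
    (hcd : c ≠ d) (hce : c ≠ e) (hde : d ≠ e) :
    let F : Finset (Finset α) :=
      {∅, {a}, {b}, {c}, {a, b}, {a, c}, {b, c}, {c, d}, {a, b, c},
        {a, c, d}, {b, c, d}, {a, b, c, d}, {a, b, c, d, e}}
    let B : Finset (Finset α) := {∅, {a}, {b}, {c}, {c, d}, {a, b, c, d, e}}
    UnionClosed F ∧ WellGraded F ∧ IsBase B F ∧ ¬ WellGraded B := by
  intro F B
  have hinj : Function.Injective ![a, b, c, d, e] := by
    intro i j hij
    fin_cases i <;> fin_cases j <;> simp_all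
  let f : Fin 5 ↪ α := ⟨![a, b, c, d, e], hinj⟩
  have hf0 : f 0 = a := rfl
  have hf1 : f 1 = b := rfl
  have hf2 : f 2 = c := rfl
  have hf3 : f 3 = d := rfl
  have hf4 : f 4 = e := rfl
  have hF : F = F5.image (Finset.map f) := by
    simp only [F5, Finset.image_insert, Finset.image_singleton, Finset.map_insert,
      Finset.map_singleton, Finset.map_empty, hf0, hf1, hf2, hf3, hf4]
    rfl
  have hB : B = B5.image (Finset.map f) := by
    simp only [B5, Finset.image_insert, Finset.image_singleton, Finset.map_insert,
      Finset.map_singleton, Finset.map_empty, hf0, hf1, hf2, hf3, hf4]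
    rfl
  refine ⟨?_, ?_, ?_, ?_⟩
  · rw [hF]; exact unionClosed_of_pairClosed (pairClosed_image f pairClosed_F5)
  · rw [hF]; exact wellGraded_of_nbGraded (nbGraded_image f nbGraded_F5)
  · rw [hF, hB]
    exact isBase_image f sub_B5 span_B5
      (fun H hH hsp => min_of_irr irr_B5 H hH (hsp.trans span_B5.symm))
  · rw [hB]
    intro hwg
    exact not_nbGraded_B5 (nbGraded_of_image f (nbGraded_of_wellGraded hwg))
end

section
/- A family B of finite sets is the base of its span if and only if every set in B is either empty or has a nonempty set of endpoints. -/
open Finset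

variable {α : Type*} [DecidableEq α]

lemma mem_Span {G : Finset (Finset α)} {S : Finset α} :
    S ∈ Span G ↔ ∃ K, K ⊆ G ∧ K.Nonempty ∧ K.sup id = S := by
  simp only [Span, Finset.mem_image, Finset.mem_filter, Finset.mem_powerset]
  tauto

lemma subset_Span {G : Finset (Finset α)} : G ⊆ Span G := by
  intro X hX
  exact mem_Span.mpr ⟨{X}, Finset.singleton_subset_iff.mpr hX,
    Finset.singleton_nonempty X, by simp⟩

lemma Span_mono {G H : Finset (Finset α)} (h : G ⊆ H) : Span G ⊆ Span H := by
  intro S hS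
  obtain ⟨K, hK, hKne, hKsup⟩ := mem_Span.mp hS
  exact mem_Span.mpr ⟨K, hK.trans h, hKne, hKsup⟩

/-- A family is the base of its span iff every member is empty or has an endpoint. -/
theorem isBase_span_iff_endpoints (B : Finset (Finset α)) :
    IsBase B (Span B) ↔ ∀ X ∈ B, X = ∅ ∨ (endpoints B X).Nonempty := by
  constructor
  · rintro ⟨-, -, hmin⟩ X hX
    by_contra h
    push_neg at h
    obtain ⟨hne, hend⟩ := h
    have hXne : X.Nonempty := hne
    set F := B.filter (fun Y => Y ⊂ X) with hF
    have hsup : F.sup id = X := by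
      apply Finset.Subset.antisymm
      · intro x hx
        obtain ⟨Y, hY, hxY⟩ := Finset.mem_sup.mp hx
        rw [hF, Finset.mem_filter] at hY
        exact hY.2.subset hxY
      · intro x hx
        by_contra hxn
        have : x ∈ endpoints B X := Finset.mem_sdiff.mpr ⟨hx, hxn⟩
        simp [hend] at this
    have hFne : F.Nonempty := by
      obtain ⟨x, hx⟩ := hXne
      rw [← hsup] at hx
      obtain ⟨Y, hY, -⟩ := Finset.mem_sup.mp hx
      exact ⟨Y, hY⟩
    have hFsub : F ⊆ B.erase X := by
      intro Y hY
      obtain ⟨hYB, hYX⟩ := Finset.mem_filter.mp hY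
      exact Finset.mem_erase.mpr ⟨hYX.ne, hYB⟩
    have hspan : Span (B.erase X) = Span B := by
      apply Finset.Subset.antisymm (Span_mono (Finset.erase_subset _ _))
      intro S hS
      obtain ⟨K, hKB, hKne, hKsup⟩ := mem_Span.mp hS
      by_cases hXK : X ∈ K
      · refine mem_Span.mpr ⟨K.erase X ∪ F, ?_, ?_, ?_⟩
        · exact Finset.union_subset (fun Y hY => Finset.mem_erase.mpr
            ⟨(Finset.mem_erase.mp hY).1, hKB (Finset.mem_erase.mp hY).2⟩) hFsub
        · exact hFne.mono Finset.subset_union_right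
        · rw [Finset.sup_union, hsup, ← hKsup]
          conv_rhs => rw [← Finset.insert_erase hXK]
          rw [Finset.sup_insert, sup_comm]
          rfl
      · exact mem_Span.mpr ⟨K, fun Y hY =>
          Finset.mem_erase.mpr ⟨fun hYX => hXK (hYX ▸ hY), hKB hY⟩, hKne, hKsup⟩
    rw [← hmin (B.erase X) (Finset.erase_subset _ _) hspan] at hX
    exact Finset.notMem_erase X B hX
  · intro hend
    refine ⟨subset_Span, rfl, fun H hH hspan => ?_⟩
    apply Finset.Subset.antisymm hH
    intro X hX
    have : X ∈ Span H := hspan ▸ subset_Span hX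
    obtain ⟨K, hKH, hKne, hKsup⟩ := mem_Span.mp this
    have hsub : ∀ Y ∈ K, Y ⊆ X := fun Y hY => hKsup ▸ Finset.le_sup (f := id) hY
    rcases hend X hX with hXe | ⟨x, hx⟩
    · obtain ⟨Y, hY⟩ := hKne
      have : Y = ∅ := Finset.subset_empty.mp (hXe ▸ hsub Y hY)
      exact hXe ▸ this ▸ hKH hY
    · obtain ⟨hxX, hxn⟩ := Finset.mem_sdiff.mp hx
      have : x ∈ K.sup id := hKsup ▸ hxX
      obtain ⟨Y, hYK, hxY⟩ := Finset.mem_sup.mp this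
      have hYX : Y = X := by
        by_contra hne
        exact hxn (Finset.mem_sup.mpr ⟨Y, Finset.mem_filter.mpr
          ⟨hH (hKH hYK), Finset.ssubset_iff_subset_ne.mpr ⟨hsub Y hYK, hne⟩⟩, hxY⟩)
      exact hYX ▸ hKH hYK
end
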